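/- (Monotone invariant combinations, upper/lower regime.) Let g satisfy (H2) and (H4): there are 0 < γ̲ ≤ γ̄ < 1 with γ̲ ≤ r g'(r)/g(r) ≤ γ̄ for r ∈ (0,1). Let 0 < b < (1 - (q/2)γ̄)/(1 - γ̲) and choose a with 1 - γ̲ < a < min((1 - (q/2)γ̄)/b, 1). Then along any solution of s' = (g(A n s^(q/2))/n)V(t), n' = -e(t) with 0 ≤ e and V > 0, the function y(n,s) = d/dt[(n s^b)^a], viewed as a function of (n,s) with the control fixed, satisfies ∂y/∂n > 0 and ∂y/∂s < 0. -/
import Mathlib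


/-- Monotone invariant combinations. With `(H2)`, `(H4)`
(`γ̲ ≤ r g'(r)/g(r) ≤ γ̄` on `(0,1)`), `0 < b < (1-(q/2)γ̄)/(1-γ̲)` and
`1-γ̲ < a < min((1-(q/2)γ̄)/b, 1)`, the function
`y(n,s) = a b n^(a-1) s^(ab-1) g(A n s^(q/2)) V - a e n^(a-1) s^(ab)`
(the time derivative of `(n s^b)^a` with the control fixed) satisfies
`∂y/∂n > 0` and `∂y/∂s < 0` at every admissible `(n,s)`. -/
theorem stmt14 (g g' : ℝ → ℝ) (A q γlo γhi a b Vt et : ℝ)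
    (hA : 0 < A) (hq1 : 1 < q) (hq2 : q < 2)
    (hderiv : ∀ r ∈ Set.Ioi (0:ℝ), HasDerivAt g (g' r) r)
    (hgpos : ∀ r ∈ Set.Ioi (0:ℝ), 0 < g r)
    (hgconc : ConcaveOn ℝ (Set.Ici 0) g)
    (hg0 : g 0 = 0) (hg1 : g 1 = 1)
    (hγlo : 0 < γlo) (hγle : γlo ≤ γhi) (hγhi : γhi < 1)
    (hqγ : (q / 2) * γhi < 1)
    (hγbound : ∀ r ∈ Set.Ioo (0:ℝ) 1,
      γlo ≤ r * g' r / g r ∧ r * g' r / g r ≤ γhi)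
    (hb : 0 < b) (hb2 : b < (1 - (q / 2) * γhi) / (1 - γlo))
    (ha1 : 1 - γlo < a) (ha2 : a < min ((1 - (q / 2) * γhi) / b) 1)
    (hV : 0 < Vt) (he : 0 ≤ et) :
    ∀ nn ss : ℝ, 0 < nn → 0 < ss → A * nn * ss ^ (q / 2) < 1 →
      (∃ D, 0 < D ∧ HasDerivAt
        (fun x => a * b * x ^ (a - 1) * ss ^ (a * b - 1) * g (A * x * ss ^ (q / 2)) * Vt
          - a * et * x ^ (a - 1) * ss ^ (a * b)) D nn)
      ∧ (∃ D, D < 0 ∧ HasDerivAt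
        (fun x => a * b * nn ^ (a - 1) * x ^ (a * b - 1) * g (A * nn * x ^ (q / 2)) * Vt
          - a * et * nn ^ (a - 1) * x ^ (a * b)) D ss) := by
  intro nn ss hn hs hr1
  have ha1' : a < 1 := lt_of_lt_of_le ha2 (min_le_right _ _)
  have ha0 : 0 < a := by linarith
  have hr0 : 0 < A * nn * ss ^ (q / 2) := by positivity
  have hG : 0 < g (A * nn * ss ^ (q / 2)) := hgpos _ hr0
  have hbd := hγbound _ ⟨hr0, hr1⟩
  have hGlo : γlo * g (A * nn * ss ^ (q / 2)) ≤
      (A * nn * ss ^ (q / 2)) * g' (A * nn * ss ^ (q / 2)) := (le_div_iff₀ hG).mp hbd.1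
  have hGhi : (A * nn * ss ^ (q / 2)) * g' (A * nn * ss ^ (q / 2)) ≤
      γhi * g (A * nn * ss ^ (q / 2)) := (div_le_iff₀ hG).mp hbd.2
  have hab : a * b < 1 - q / 2 * γhi :=
    (lt_div_iff₀ hb).mp (lt_of_lt_of_le ha2 (min_le_left _ _))
  set G := g (A * nn * ss ^ (q / 2)) with hGdef
  set Gp := g' (A * nn * ss ^ (q / 2)) with hGpdef
  constructor
  · -- n-direction
    have h1 : HasDerivAt (fun x : ℝ => x ^ (a - 1)) ((a - 1) * nn ^ (a - 1 - 1)) nn :=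
      Real.hasDerivAt_rpow_const (Or.inl hn.ne')
    have hinner : HasDerivAt (fun x : ℝ => A * x * ss ^ (q / 2)) (A * ss ^ (q / 2)) nn := by
      simpa using ((hasDerivAt_id nn).const_mul A).mul_const (ss ^ (q / 2))
    have hg : HasDerivAt (fun x : ℝ => g (A * x * ss ^ (q / 2)))
        (Gp * (A * ss ^ (q / 2))) nn := (hderiv _ hr0).comp nn hinner
    have hu : HasDerivAt (fun x : ℝ => a * b * x ^ (a - 1) * ss ^ (a * b - 1))
        (a * b * ((a - 1) * nn ^ (a - 1 - 1)) * ss ^ (a * b - 1)) nn :=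
      (h1.const_mul (a * b)).mul_const _
    have hw : HasDerivAt (fun x : ℝ => a * et * x ^ (a - 1) * ss ^ (a * b))
        (a * et * ((a - 1) * nn ^ (a - 1 - 1)) * ss ^ (a * b)) nn :=
      (h1.const_mul (a * et)).mul_const _
    have H := ((hu.mul hg).mul_const Vt).sub hw
    refine ⟨_, ?_, H⟩
    have hpow : nn ^ (a - 1) = nn ^ (a - 1 - 1) * nn := by
      rw [← Real.rpow_add_one hn.ne']; congr 1; ring
    have hP : 0 < nn ^ (a - 1 - 1) := Real.rpow_pos_of_pos hn _
    have hS1 : 0 < ss ^ (a * b - 1) := Real.rpow_pos_of_pos hs _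
    have hS2 : 0 < ss ^ (a * b) := Real.rpow_pos_of_pos hs _
    have hbr : 0 < (a - 1) * G + (A * nn * ss ^ (q / 2)) * Gp := by
      nlinarith [mul_pos (show (0:ℝ) < a - 1 + γlo by linarith) hG]
    have hDeq : (a * b * ((a - 1) * nn ^ (a - 1 - 1)) * ss ^ (a * b - 1) * G
          + a * b * nn ^ (a - 1) * ss ^ (a * b - 1) * (Gp * (A * ss ^ (q / 2)))) * Vt
          - a * et * ((a - 1) * nn ^ (a - 1 - 1)) * ss ^ (a * b)
        = a * b * ss ^ (a * b - 1) * Vt * nn ^ (a - 1 - 1)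
            * ((a - 1) * G + (A * nn * ss ^ (q / 2)) * Gp)
          + a * et * (1 - a) * (nn ^ (a - 1 - 1) * ss ^ (a * b)) := by
      rw [hpow]; ring
    have t1 : 0 < a * b * ss ^ (a * b - 1) * Vt * nn ^ (a - 1 - 1)
        * ((a - 1) * G + (A * nn * ss ^ (q / 2)) * Gp) :=
      mul_pos (mul_pos (mul_pos (mul_pos (mul_pos ha0 hb) hS1) hV) hP) hbr
    have t2 : 0 ≤ a * et * (1 - a) * (nn ^ (a - 1 - 1) * ss ^ (a * b)) :=
      mul_nonneg (mul_nonneg (mul_nonneg ha0.le he) (by linarith)) (mul_pos hP hS2).le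
    rw [hDeq]; linarith
  · -- s-direction
    have h1 : HasDerivAt (fun x : ℝ => x ^ (a * b - 1)) ((a * b - 1) * ss ^ (a * b - 1 - 1)) ss :=
      Real.hasDerivAt_rpow_const (Or.inl hs.ne')
    have h2 : HasDerivAt (fun x : ℝ => x ^ (a * b)) (a * b * ss ^ (a * b - 1)) ss :=
      Real.hasDerivAt_rpow_const (Or.inl hs.ne')
    have hq : HasDerivAt (fun x : ℝ => x ^ (q / 2)) (q / 2 * ss ^ (q / 2 - 1)) ss :=
      Real.hasDerivAt_rpow_const (Or.inl hs.ne')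
    have hinner : HasDerivAt (fun x : ℝ => A * nn * x ^ (q / 2))
        (A * nn * (q / 2 * ss ^ (q / 2 - 1))) ss := hq.const_mul (A * nn)
    have hg : HasDerivAt (fun x : ℝ => g (A * nn * x ^ (q / 2)))
        (Gp * (A * nn * (q / 2 * ss ^ (q / 2 - 1)))) ss := (hderiv _ hr0).comp ss hinner
    have hu : HasDerivAt (fun x : ℝ => a * b * nn ^ (a - 1) * x ^ (a * b - 1))
        (a * b * nn ^ (a - 1) * ((a * b - 1) * ss ^ (a * b - 1 - 1))) ss :=
      h1.const_mul _
    have hw : HasDerivAt (fun x : ℝ => a * et * nn ^ (a - 1) * x ^ (a * b))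
        (a * et * nn ^ (a - 1) * (a * b * ss ^ (a * b - 1))) ss :=
      h2.const_mul _
    have H := ((hu.mul hg).mul_const Vt).sub hw
    refine ⟨_, ?_, H⟩
    have hP : 0 < nn ^ (a - 1) := Real.rpow_pos_of_pos hn _
    have hQ : 0 < ss ^ (a * b - 1 - 1) := Real.rpow_pos_of_pos hs _
    have hS1 : 0 < ss ^ (a * b - 1) := Real.rpow_pos_of_pos hs _
    have hpb : ss ^ (a * b - 1) = ss ^ (a * b - 1 - 1) * ss := by
      rw [← Real.rpow_add_one hs.ne']; congr 1; ring
    have hpq : ss ^ (q / 2) = ss ^ (q / 2 - 1) * ss := by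
      rw [← Real.rpow_add_one hs.ne']; congr 1; ring
    have hbr : (a * b - 1) * G + q / 2 * ((A * nn * ss ^ (q / 2)) * Gp) < 0 := by
      have hq0 : (0:ℝ) < q / 2 := by linarith
      have h3 : q / 2 * ((A * nn * ss ^ (q / 2)) * Gp) ≤ q / 2 * (γhi * G) :=
        mul_le_mul_of_nonneg_left hGhi hq0.le
      nlinarith [mul_pos (show (0:ℝ) < 1 - q / 2 * γhi - a * b by linarith) hG]
    have hDeq : (a * b * nn ^ (a - 1) * ((a * b - 1) * ss ^ (a * b - 1 - 1)) * G
          + a * b * nn ^ (a - 1) * ss ^ (a * b - 1)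
            * (Gp * (A * nn * (q / 2 * ss ^ (q / 2 - 1))))) * Vt
          - a * et * nn ^ (a - 1) * (a * b * ss ^ (a * b - 1))
        = a * b * nn ^ (a - 1) * Vt * ss ^ (a * b - 1 - 1)
            * ((a * b - 1) * G + q / 2 * ((A * nn * ss ^ (q / 2)) * Gp))
          - a * et * a * b * (nn ^ (a - 1) * ss ^ (a * b - 1)) := by
      rw [hpb, hpq]; ring
    have t1 : a * b * nn ^ (a - 1) * Vt * ss ^ (a * b - 1 - 1)
        * ((a * b - 1) * G + q / 2 * ((A * nn * ss ^ (q / 2)) * Gp)) < 0 :=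
      mul_neg_of_pos_of_neg (mul_pos (mul_pos (mul_pos (mul_pos ha0 hb) hP) hV) hQ) hbr
    have t2 : 0 ≤ a * et * a * b * (nn ^ (a - 1) * ss ^ (a * b - 1)) :=
      mul_nonneg (mul_nonneg (mul_nonneg (mul_nonneg ha0.le he) ha0.le) hb.le)
        (mul_pos hP hS1).le
    rw [hDeq]; linarith
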